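/- Let β be irrational with continued-fraction denominators (q_n), let g : ℝ/ℤ → ℝ/ℤ be a homeomorphism conjugate to R_β via a homeomorphism H (H ∘ R_β = g ∘ H) such that no C¹ conjugacy between R_β and g exists. Let α be irrational Diophantine such that (q_{n_k}+1)α → 0 (mod 1) along some diverging subsequence (n_k). Then there is no C¹ diffeomorphism F of the 2-torus conjugating T₁ = R_α × R_β to T₂ = R_α × g. -/

import Mathlib

open Filter

/-- A map of the circle `ℝ/ℤ` is of class `C¹` if it lifts to a `C¹` map `ℝ → ℝ`. -/
def IsC1CircleMap (h : AddCircle (1 : ℝ) → AddCircle (1 : ℝ)) : Prop :=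
  ∃ h' : ℝ → ℝ, ContDiff ℝ 1 h' ∧ ∀ x : ℝ, h (x : AddCircle (1 : ℝ)) = ((h' x : ℝ) : AddCircle (1 : ℝ))

/-- A map of the 2-torus `(ℝ/ℤ)²` is of class `C¹` if it lifts to a `C¹` map `ℝ² → ℝ²`. -/
def IsC1TorusMap
    (F : AddCircle (1 : ℝ) × AddCircle (1 : ℝ) → AddCircle (1 : ℝ) × AddCircle (1 : ℝ)) : Prop :=
  ∃ F' : ℝ × ℝ → ℝ × ℝ, ContDiff ℝ 1 F' ∧
    ∀ v : ℝ × ℝ, F ((v.1 : AddCircle (1 : ℝ)), (v.2 : AddCircle (1 : ℝ)))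
      = (((F' v).1 : AddCircle (1 : ℝ)), ((F' v).2 : AddCircle (1 : ℝ)))

local notation "𝕋" => AddCircle (1 : ℝ)

/-- The integer multiples of an irrational number are dense in the circle. -/
lemma dense_zmultiples_of_irrational {β : ℝ} (hβ : Irrational β) :
    Dense ((AddSubgroup.zmultiples ((β : ℝ) : 𝕋) : AddSubgroup 𝕋) : Set 𝕋) := by
  -- the subgroup of ℝ generated by 1 and β is dense
  have hT : Dense ((AddSubgroup.closure ({1, β} : Set ℝ) : AddSubgroup ℝ) : Set ℝ) := by
    rcases (AddSubgroup.closure ({1, β} : Set ℝ)).dense_or_cyclic with h | ⟨a, ha⟩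
    · exact h
    · exfalso
      have h1 : (1 : ℝ) ∈ AddSubgroup.closure ({1, β} : Set ℝ) :=
        AddSubgroup.subset_closure (by simp)
      have h2 : β ∈ AddSubgroup.closure ({1, β} : Set ℝ) :=
        AddSubgroup.subset_closure (by simp)
      rw [ha, AddSubgroup.mem_closure_singleton] at h1 h2
      obtain ⟨n, hn⟩ := h1
      obtain ⟨m, hm⟩ := h2
      have hn0 : (n : ℝ) ≠ 0 := by
        rintro h0
        rw [zsmul_eq_mul, h0, zero_mul] at hn
        exact one_ne_zero hn.symm
      apply hβ
      refine ⟨(m : ℚ) / (n : ℚ), ?_⟩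
      rw [zsmul_eq_mul] at hn hm
      have ha' : a = 1 / n := by field_simp [eq_comm] at hn ⊢; linarith [hn]
      push_cast
      rw [← hm, ha']
      field_simp
  intro x
  obtain ⟨r, rfl⟩ : ∃ r : ℝ, (r : 𝕋) = x := Quotient.exists_rep x
  have hr : r ∈ closure ((AddSubgroup.closure ({1, β} : Set ℝ) : AddSubgroup ℝ) : Set ℝ) :=
    hT r
  have hcont : Continuous (fun t : ℝ => (t : 𝕋)) := AddCircle.continuous_mk' 1
  have himg : (fun t : ℝ => (t : 𝕋)) '' ((AddSubgroup.closure ({1, β} : Set ℝ) : AddSubgroup ℝ) : Set ℝ)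
      ⊆ ((AddSubgroup.zmultiples ((β : ℝ) : 𝕋) : AddSubgroup 𝕋) : Set 𝕋) := by
    rintro _ ⟨t, ht, rfl⟩
    have : ((QuotientAddGroup.mk' (AddSubgroup.zmultiples (1:ℝ))).comp (AddMonoidHom.id ℝ)) t ∈
        AddSubgroup.map (QuotientAddGroup.mk' (AddSubgroup.zmultiples (1:ℝ)))
          (AddSubgroup.closure ({1, β} : Set ℝ)) := by
      exact AddSubgroup.mem_map_of_mem _ ht
    rw [AddMonoidHom.map_closure] at this
    have hsub : (QuotientAddGroup.mk' (AddSubgroup.zmultiples (1:ℝ))) '' ({1, β} : Set ℝ) ⊆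
        (AddSubgroup.zmultiples ((β : ℝ) : 𝕋) : AddSubgroup 𝕋) := by
      rintro _ ⟨s, hs, rfl⟩
      rcases hs with rfl | rfl
      · have h1 : ((1:ℝ) : 𝕋) = 0 := AddCircle.coe_period 1
        simpa [QuotientAddGroup.mk'_apply, h1] using (AddSubgroup.zmultiples ((β : ℝ) : 𝕋)).zero_mem
      · simpa [QuotientAddGroup.mk'_apply] using AddSubgroup.mem_zmultiples ((β : ℝ) : 𝕋)
    have := (AddSubgroup.closure_le _).mpr hsub this
    simpa using this
  have : (r : 𝕋) ∈ closure ((fun t : ℝ => (t : 𝕋)) ''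
      ((AddSubgroup.closure ({1, β} : Set ℝ) : AddSubgroup ℝ) : Set ℝ)) :=
    (image_closure_subset_closure_image hcont) ⟨r, hr, rfl⟩
  exact closure_mono himg this

/-- A continuous function on the circle invariant under an irrational rotation is constant. -/
lemma const_of_rot_invariant {β : ℝ} (hβ : Irrational β) {γ : Type*} [TopologicalSpace γ]
    [T2Space γ] (f : 𝕋 → γ) (hf : Continuous f)
    (hinv : ∀ y : 𝕋, f (y + (β : 𝕋)) = f y) : ∀ y, f y = f 0 := by
  intro y
  have hz : ∀ n : ℤ, f (y + n • ((β:ℝ) : 𝕋)) = f y := by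
    intro n
    induction n using Int.induction_on with
    | zero => simp
    | succ n ih =>
      have h := hinv (y + (n : ℤ) • ((β:ℝ) : 𝕋))
      rw [ih] at h
      rw [← h]
      congr 1
      rw [add_zsmul, one_zsmul]
      abel
    | pred n ih =>
      have h := hinv (y + (-(n : ℤ) - 1) • ((β:ℝ) : 𝕋))
      rw [show y + (-(n:ℤ) - 1) • ((β:ℝ) : 𝕋) + ((β:ℝ) : 𝕋) = y + (-(n:ℤ)) • ((β:ℝ) : 𝕋) by
        rw [sub_zsmul, one_zsmul]; abel] at h
      rw [ih] at h
      exact h.symm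
  have hDc : IsClosed {w : 𝕋 | f (y + w) = f y} :=
    isClosed_eq (hf.comp (continuous_const.add continuous_id)) continuous_const
  have hDs : ((AddSubgroup.zmultiples ((β : ℝ) : 𝕋) : AddSubgroup 𝕋) : Set 𝕋) ⊆
      {w : 𝕋 | f (y + w) = f y} := by
    rintro w hw
    obtain ⟨n, rfl⟩ := AddSubgroup.mem_zmultiples_iff.mp hw
    exact hz n
  have hall : {w : 𝕋 | f (y + w) = f y} = Set.univ := by
    apply Set.eq_univ_of_subset _ rfl
    calc Set.univ = closure ((AddSubgroup.zmultiples ((β : ℝ) : 𝕋) : AddSubgroup 𝕋) : Set 𝕋) :=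
        ((dense_zmultiples_of_irrational hβ).closure_eq).symm
      _ ⊆ closure {w : 𝕋 | f (y + w) = f y} := closure_mono hDs
      _ = {w : 𝕋 | f (y + w) = f y} := hDc.closure_eq
  have : (-y) ∈ {w : 𝕋 | f (y + w) = f y} := hall ▸ Set.mem_univ _
  simpa using this.symm


/-- Let `β` be irrational with continued-fraction denominators `(q n)` (so that
`q_n β → 0 (mod 1)`), and let `g` be a circle homeomorphism conjugate to `R_β` via a
homeomorphism `H` (`H ∘ R_β = g ∘ H`), such that no `C¹` conjugacy between `R_β` and `g`
exists.  Let `α` be an irrational Diophantine number with `(q_{n_k}+1) α → 0 (mod 1)`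
along a diverging subsequence `(n_k)`.  Then there is no `C¹` diffeomorphism of the
2-torus conjugating `T₁ = R_α × R_β` to `T₂ = R_α × g`. -/
theorem stmt6 (α β : ℝ) (hα : Irrational α) (hβ : Irrational β)
    (hdioph : ∃ C > (0 : ℝ), ∃ τ > (1 : ℝ), ∀ n : ℕ, 1 ≤ n →
      C * (n : ℝ) ^ (-τ) ≤ ‖(((n : ℝ) * α : ℝ) : AddCircle (1 : ℝ))‖)
    (q : ℕ → ℕ) (hqpos : ∀ n, 0 < q n) (hqmono : StrictMono q)
    (hqβ : Tendsto (fun n => ‖(((q n : ℝ) * β : ℝ) : AddCircle (1 : ℝ))‖) atTop (nhds 0))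
    (nk : ℕ → ℕ) (hnk : StrictMono nk)
    (hqα : Tendsto (fun k => ‖((((q (nk k) : ℝ) + 1) * α : ℝ) : AddCircle (1 : ℝ))‖) atTop (nhds 0))
    (g H : AddCircle (1 : ℝ) ≃ₜ AddCircle (1 : ℝ))
    (hconj : ∀ y : AddCircle (1 : ℝ), H (y + (β : AddCircle (1 : ℝ))) = g (H y))
    (hnoC1 : ¬ ∃ H' : AddCircle (1 : ℝ) ≃ₜ AddCircle (1 : ℝ),
      IsC1CircleMap H' ∧ IsC1CircleMap H'.symm ∧
        ∀ y : AddCircle (1 : ℝ), H' (y + (β : AddCircle (1 : ℝ))) = g (H' y))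
    (T₁ T₂ : AddCircle (1 : ℝ) × AddCircle (1 : ℝ) → AddCircle (1 : ℝ) × AddCircle (1 : ℝ))
    (hT₁ : ∀ p, T₁ p = (p.1 + (α : AddCircle (1 : ℝ)), p.2 + (β : AddCircle (1 : ℝ))))
    (hT₂ : ∀ p, T₂ p = (p.1 + (α : AddCircle (1 : ℝ)), g p.2)) :
    ¬ ∃ F : AddCircle (1 : ℝ) × AddCircle (1 : ℝ) ≃ₜ AddCircle (1 : ℝ) × AddCircle (1 : ℝ),
      IsC1TorusMap F ∧ IsC1TorusMap F.symm ∧ ∀ p, F (T₁ p) = T₂ (F p) := by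
  rintro ⟨F, ⟨F', hF'cd, hF'lift⟩, ⟨G', hG'cd, hG'lift⟩, hFT⟩
  -- F.symm intertwines T₂ and T₁
  have hFsymmT : ∀ p, F.symm (T₂ p) = T₁ (F.symm p) := by
    intro p
    have h := hFT (F.symm p)
    rw [F.apply_symm_apply] at h
    rw [← h, F.symm_apply_apply]
  -- iterated conjugacy relation for F
  have claim1 : ∀ (m : ℕ) (x y : 𝕋),
      F (x + (((m : ℝ) * α : ℝ) : 𝕋), y + (((m : ℝ) * β : ℝ) : 𝕋))
        = ((F (x, y)).1 + (((m : ℝ) * α : ℝ) : 𝕋),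
           H (H.symm (F (x, y)).2 + (((m : ℝ) * β : ℝ) : 𝕋))) := by
    intro m x y
    induction m with
    | zero => simp
    | succ m ih =>
      have key := hFT (x + (((m : ℝ) * α : ℝ) : 𝕋), y + (((m : ℝ) * β : ℝ) : 𝕋))
      rw [hT₁, hT₂, ih] at key
      dsimp only at key
      have hca : ((((m : ℕ) + 1 : ℕ) : ℝ) * α : ℝ) = (m : ℝ) * α + α := by push_cast; ring
      have hcb : ((((m : ℕ) + 1 : ℕ) : ℝ) * β : ℝ) = (m : ℝ) * β + β := by push_cast; ring
      rw [hca, hcb, AddCircle.coe_add, AddCircle.coe_add]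
      simp only [← add_assoc]
      rw [key]
      exact Prod.ext rfl (hconj (H.symm (F (x, y)).2 + (((m : ℝ) * β : ℝ) : 𝕋))).symm
  -- iterated conjugacy relation for F.symm
  have claim2 : ∀ (m : ℕ) (x y : 𝕋),
      F.symm (x + (((m : ℝ) * α : ℝ) : 𝕋), H (H.symm y + (((m : ℝ) * β : ℝ) : 𝕋)))
        = ((F.symm (x, y)).1 + (((m : ℝ) * α : ℝ) : 𝕋),
           (F.symm (x, y)).2 + (((m : ℝ) * β : ℝ) : 𝕋)) := by
    intro m x y
    induction m with
    | zero => simp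
    | succ m ih =>
      have key := hFsymmT (x + (((m : ℝ) * α : ℝ) : 𝕋),
        H (H.symm y + (((m : ℝ) * β : ℝ) : 𝕋)))
      rw [hT₂, hT₁, ih] at key
      dsimp only at key
      have hca : ((((m : ℕ) + 1 : ℕ) : ℝ) * α : ℝ) = (m : ℝ) * α + α := by push_cast; ring
      have hcb : ((((m : ℕ) + 1 : ℕ) : ℝ) * β : ℝ) = (m : ℝ) * β + β := by push_cast; ring
      rw [hca, hcb, AddCircle.coe_add, AddCircle.coe_add]
      simp only [← add_assoc]
      rw [show H (H.symm y + (((m : ℝ) * β : ℝ) : 𝕋) + ((β : ℝ) : 𝕋))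
          = g (H (H.symm y + (((m : ℝ) * β : ℝ) : 𝕋))) from hconj _]
      exact key
  -- the subsequence of iterates
  set m : ℕ → ℕ := fun k => q (nk k) + 1 with hm
  have hA0 : Tendsto (fun k => ((((m k : ℕ) : ℝ) * α : ℝ) : 𝕋)) atTop (nhds 0) := by
    rw [tendsto_zero_iff_norm_tendsto_zero]
    convert hqα using 2 with k
    push_cast [hm]
    ring_nf
  have hB0 : Tendsto (fun k => (((q (nk k) : ℝ) * β : ℝ) : 𝕋)) atTop (nhds 0) := by
    rw [tendsto_zero_iff_norm_tendsto_zero]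
    exact hqβ.comp hnk.tendsto_atTop
  have hBβ : Tendsto (fun k => ((((m k : ℕ) : ℝ) * β : ℝ) : 𝕋)) atTop (nhds ((β : ℝ) : 𝕋)) := by
    have heq : (fun k => ((((m k : ℕ) : ℝ) * β : ℝ) : 𝕋))
        = fun k => (((q (nk k) : ℝ) * β : ℝ) : 𝕋) + ((β : ℝ) : 𝕋) := by
      funext k
      rw [← AddCircle.coe_add]
      congr 1
      push_cast [hm]
      ring
    rw [heq]
    simpa using hB0.add (tendsto_const_nhds (x := ((β : ℝ) : 𝕋)))
  -- passing to the limit: fiberwise relation for F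
  have eq1 : ∀ x y : 𝕋, F (x, y + ((β : ℝ) : 𝕋)) = ((F (x, y)).1, g (F (x, y)).2) := by
    intro x y
    have hL : Tendsto (fun k => F (x + ((((m k : ℕ) : ℝ) * α : ℝ) : 𝕋),
        y + ((((m k : ℕ) : ℝ) * β : ℝ) : 𝕋))) atTop (nhds (F (x, y + ((β : ℝ) : 𝕋)))) := by
      have h1 : Tendsto (fun k => (x + ((((m k : ℕ) : ℝ) * α : ℝ) : 𝕋),
          y + ((((m k : ℕ) : ℝ) * β : ℝ) : 𝕋))) atTop (nhds (x + 0, y + ((β : ℝ) : 𝕋))) :=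
        ((tendsto_const_nhds.add hA0).prodMk_nhds (tendsto_const_nhds.add hBβ))
      rw [add_zero] at h1
      exact (F.continuous.tendsto _).comp h1
    have hR : Tendsto (fun k => F (x + ((((m k : ℕ) : ℝ) * α : ℝ) : 𝕋),
        y + ((((m k : ℕ) : ℝ) * β : ℝ) : 𝕋))) atTop
        (nhds ((F (x, y)).1, g (F (x, y)).2)) := by
      have heq : (fun k => F (x + ((((m k : ℕ) : ℝ) * α : ℝ) : 𝕋),
          y + ((((m k : ℕ) : ℝ) * β : ℝ) : 𝕋)))
          = fun k => ((F (x, y)).1 + ((((m k : ℕ) : ℝ) * α : ℝ) : 𝕋),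
              H (H.symm (F (x, y)).2 + ((((m k : ℕ) : ℝ) * β : ℝ) : 𝕋))) :=
        funext fun k => claim1 (m k) x y
      rw [heq]
      have h1 : Tendsto (fun k => (F (x, y)).1 + ((((m k : ℕ) : ℝ) * α : ℝ) : 𝕋)) atTop
          (nhds ((F (x, y)).1)) := by
        simpa using tendsto_const_nhds.add hA0
      have h2 : Tendsto (fun k => H (H.symm (F (x, y)).2 + ((((m k : ℕ) : ℝ) * β : ℝ) : 𝕋)))
          atTop (nhds (g (F (x, y)).2)) := by
        have h3 : Tendsto (fun k => H.symm (F (x, y)).2 + ((((m k : ℕ) : ℝ) * β : ℝ) : 𝕋))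
            atTop (nhds (H.symm (F (x, y)).2 + ((β : ℝ) : 𝕋))) :=
          tendsto_const_nhds.add hBβ
        have h4 := (H.continuous.tendsto _).comp h3
        rwa [hconj, H.apply_symm_apply] at h4
      exact h1.prodMk_nhds h2
    exact tendsto_nhds_unique hL hR
  -- passing to the limit: fiberwise relation for F.symm
  have eq2 : ∀ x y : 𝕋, F.symm (x, g y) = ((F.symm (x, y)).1, (F.symm (x, y)).2 + ((β : ℝ) : 𝕋)) := by
    intro x y
    have hL : Tendsto (fun k => F.symm (x + ((((m k : ℕ) : ℝ) * α : ℝ) : 𝕋),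
        H (H.symm y + ((((m k : ℕ) : ℝ) * β : ℝ) : 𝕋)))) atTop (nhds (F.symm (x, g y))) := by
      have h3 : Tendsto (fun k => H (H.symm y + ((((m k : ℕ) : ℝ) * β : ℝ) : 𝕋)))
          atTop (nhds (g y)) := by
        have h4 := (H.continuous.tendsto _).comp
          (tendsto_const_nhds (x := H.symm y) |>.add hBβ)
        rwa [hconj, H.apply_symm_apply] at h4
      have h1 : Tendsto (fun k => (x + ((((m k : ℕ) : ℝ) * α : ℝ) : 𝕋),
          H (H.symm y + ((((m k : ℕ) : ℝ) * β : ℝ) : 𝕋)))) atTop (nhds (x + 0, g y)) :=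
        ((tendsto_const_nhds.add hA0).prodMk_nhds h3)
      rw [add_zero] at h1
      exact (F.symm.continuous.tendsto _).comp h1
    have hR : Tendsto (fun k => F.symm (x + ((((m k : ℕ) : ℝ) * α : ℝ) : 𝕋),
        H (H.symm y + ((((m k : ℕ) : ℝ) * β : ℝ) : 𝕋)))) atTop
        (nhds ((F.symm (x, y)).1, (F.symm (x, y)).2 + ((β : ℝ) : 𝕋))) := by
      have heq : (fun k => F.symm (x + ((((m k : ℕ) : ℝ) * α : ℝ) : 𝕋),
          H (H.symm y + ((((m k : ℕ) : ℝ) * β : ℝ) : 𝕋))))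
          = fun k => ((F.symm (x, y)).1 + ((((m k : ℕ) : ℝ) * α : ℝ) : 𝕋),
              (F.symm (x, y)).2 + ((((m k : ℕ) : ℝ) * β : ℝ) : 𝕋)) :=
        funext fun k => claim2 (m k) x y
      rw [heq]
      have h1 : Tendsto (fun k => (F.symm (x, y)).1 + ((((m k : ℕ) : ℝ) * α : ℝ) : 𝕋)) atTop
          (nhds ((F.symm (x, y)).1)) := by simpa using tendsto_const_nhds.add hA0
      exact h1.prodMk_nhds (tendsto_const_nhds.add hBβ)
    exact tendsto_nhds_unique hL hR
  -- the first coordinate of F (0, ·) is constant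
  have hc1 : ∀ y : 𝕋, (F (0, y)).1 = (F (0, 0)).1 := by
    apply const_of_rot_invariant hβ (fun y => (F (0, y)).1)
    · exact (F.continuous.comp (Continuous.prodMk_right 0)).fst
    · intro y
      show (F (0, y + ((β : ℝ) : 𝕋))).1 = (F (0, y)).1
      rw [eq1 0 y]
  set c : 𝕋 := (F (0, 0)).1 with hc
  set φ : 𝕋 → 𝕋 := fun y => (F (0, y)).2 with hφ
  have hF0 : ∀ y : 𝕋, F (0, y) = (c, φ y) := fun y => Prod.ext (hc1 y) rfl
  have hφconj : ∀ y : 𝕋, φ (y + ((β : ℝ) : 𝕋)) = g (φ y) := by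
    intro y
    have h := congrArg Prod.snd (eq1 0 y)
    simpa [hφ] using h
  -- the first coordinate of F.symm (c, ·) is constant, in fact zero
  have hc2 : ∀ z : 𝕋, (F.symm (c, z)).1 = 0 := by
    have hconst : ∀ y : 𝕋, (F.symm (c, H y)).1 = (F.symm (c, H 0)).1 := by
      apply const_of_rot_invariant hβ (fun y => (F.symm (c, H y)).1)
      · exact ((F.symm.continuous.comp (Continuous.prodMk_right c)).comp H.continuous).fst
      · intro y
        show (F.symm (c, H (y + ((β : ℝ) : 𝕋)))).1 = (F.symm (c, H y)).1
        rw [hconj, eq2 c (H y)]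
    have hall : ∀ z : 𝕋, (F.symm (c, z)).1 = (F.symm (c, H 0)).1 := by
      intro z
      have := hconst (H.symm z)
      rwa [H.apply_symm_apply] at this
    have hzero : (F.symm (c, φ 0)).1 = 0 := by
      rw [← hF0 0, F.symm_apply_apply]
    intro z
    rw [hall z, ← hall (φ 0), hzero]
  set ψ : 𝕋 → 𝕋 := fun z => (F.symm (c, z)).2 with hψ
  have hG0 : ∀ z : 𝕋, F.symm (c, z) = (0, ψ z) := fun z => Prod.ext (hc2 z) rfl
  have hψconj : ∀ z : 𝕋, ψ (g z) = ψ z + ((β : ℝ) : 𝕋) := by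
    intro z
    have h := congrArg Prod.snd (eq2 c z)
    simpa [hψ] using h
  have hleft : ∀ y : 𝕋, ψ (φ y) = y := by
    intro y
    have : F.symm (c, φ y) = (0, y) := by rw [← hF0 y, F.symm_apply_apply]
    have h2 := congrArg Prod.snd this
    simpa [hψ] using h2
  have hright : ∀ z : 𝕋, φ (ψ z) = z := by
    intro z
    have : F (0, ψ z) = (c, z) := by rw [← hG0 z, F.apply_symm_apply]
    have h2 := congrArg Prod.snd this
    simpa [hφ] using h2
  have hφcont : Continuous φ := (F.continuous.comp (Continuous.prodMk_right 0)).snd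
  have hψcont : Continuous ψ := (F.symm.continuous.comp (Continuous.prodMk_right c)).snd
  -- assemble the circle homeomorphism
  refine hnoC1 ⟨⟨⟨φ, ψ, hleft, hright⟩, hφcont, hψcont⟩, ?_, ?_, hφconj⟩
  · -- φ is C¹
    refine ⟨fun t => (F' ((0 : ℝ), t)).2, ?_, ?_⟩
    · exact (hF'cd.comp (ContDiff.prodMk (contDiff_const (c := (0 : ℝ))) contDiff_id)).snd
    · intro t
      have h := hF'lift ((0 : ℝ), t)
      have h0 : (((0 : ℝ) : ℝ) : 𝕋) = (0 : 𝕋) := by norm_num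
      rw [h0] at h
      exact congrArg Prod.snd h
  · -- ψ is C¹
    refine ⟨fun t => (G' ((F' ((0 : ℝ), (0 : ℝ))).1, t)).2, ?_, ?_⟩
    · exact (hG'cd.comp (ContDiff.prodMk (contDiff_const (c := (F' ((0 : ℝ), (0 : ℝ))).1)) contDiff_id)).snd
    · intro t
      have hc0 : c = (((F' ((0 : ℝ), (0 : ℝ))).1 : ℝ) : 𝕋) := by
        have h := hF'lift ((0 : ℝ), (0 : ℝ))
        have h0 : (((0 : ℝ) : ℝ) : 𝕋) = (0 : 𝕋) := by norm_num
        rw [h0] at h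
        rw [hc, h]
      have h := hG'lift ((F' ((0 : ℝ), (0 : ℝ))).1, t)
      show ψ ((t : ℝ) : 𝕋) = _
      rw [hψ]
      simp only
      rw [hc0, h]
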